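/- For all integers k ≥ 3 and p ≥ 5, we have g^k_1(p) < 2^{2k(p−2)−3}; that is, every Gallai-k-coloring of the complete graph on 2^{2k(p−2)−3} vertices contains a monochromatic copy of K_p. -/

import Mathlib

open Finset

/-- A Gallai coloring: a symmetric edge-coloring of the complete graph on `V`
with no rainbow triangle. -/
def IsGallai {V β : Type*} (c : V → V → β) : Prop :=
  (∀ a b, c a b = c b a) ∧
  ∀ a b d : V, a ≠ b → a ≠ d → b ≠ d →
    ¬(c a b ≠ c a d ∧ c a b ≠ c b d ∧ c a d ≠ c b d)

/-- The set of colors appearing on edges inside the vertex set `S`. -/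
def colorsOn {V β : Type*} [DecidableEq V] [DecidableEq β]
    (c : V → V → β) (S : Finset V) : Finset β :=
  ((S ×ˢ S).filter fun p => p.1 ≠ p.2).image fun p => c p.1 p.2

/-- `gallaiNum k q p` is the smallest positive `n` such that every Gallai-`k`-coloring
of `K_n` contains a set of `p` vertices whose induced edges use at most `q` colors. -/
noncomputable def gallaiNum (k q p : ℕ) : ℕ :=
  sInf {n : ℕ | 0 < n ∧ ∀ c : Fin n → Fin n → Fin k, IsGallai c →
    ∃ S : Finset (Fin n), S.card = p ∧ (colorsOn c S).card ≤ q}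

lemma star_lemma {n k : ℕ} (c : Fin n → Fin n → Fin k) (hc : IsGallai c)
    (S : Finset (Fin n)) (hS : 2 ≤ S.card) :
    ∃ v ∈ S, ∃ i : Fin k, ∃ T ⊆ S.erase v,
      (∀ w ∈ T, c v w = i) ∧ S.card + 1 ≤ 3 * T.card := by
  by_contra hcon
  push_neg at hcon
  have hT : ∀ v ∈ S, ∀ i : Fin k,
      3 * ((S.erase v).filter (fun w => c v w = i)).card ≤ S.card := by
    intro v hv i
    have := hcon v hv i _ (filter_subset _ _) (fun w hw => (mem_filter.mp hw).2)
    omega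
  obtain ⟨u, hu⟩ : S.Nonempty := card_pos.mp (by omega)
  have hsymm := hc.1
  have hcardE : (S.erase u).card + 1 = S.card := by
    rw [card_erase_of_mem hu]; omega
  have he1 : 1 ≤ (S.erase u).card := by omega
  -- G1 : row lower bound
  have G1 : ∀ x ∈ S.erase u,
      3 * (S.erase u).card ≤
        3 * ((S.erase u).filter (fun w => ¬(c u w = c u x))).card + ((S.erase u).card + 1) := by
    intro x hx
    have hsplit := card_filter_add_card_filter_not
      (s := S.erase u) (p := fun w => c u w = c u x)
    have hb := hT u hu (c u x)
    omega
  -- G2 : row covered by row1 ∪ row2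
  have G2 : ∀ x ∈ S.erase u,
      ((S.erase u).filter (fun w => ¬(c u w = c u x))).card ≤
        ((S.erase u).filter (fun w => ¬(c u w = c u x) ∧ c u x = c x w)).card +
        ((S.erase u).filter (fun w => ¬(c u w = c u x) ∧ c u w = c x w)).card := by
    intro x hx
    refine le_trans (card_le_card ?_) (card_union_le _ _)
    intro w hw
    obtain ⟨hwE, hne⟩ := mem_filter.mp hw
    have hxu : x ≠ u := (mem_erase.mp hx).1
    have hwu : w ≠ u := (mem_erase.mp hwE).1
    have hxw : x ≠ w := fun h => hne (by rw [h])
    have hng := hc.2 u x w hxu.symm hwu.symm hxw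
    have hne' : c u x ≠ c u w := fun h => hne h.symm
    by_cases h1 : c u x = c x w
    · exact mem_union_left _ (mem_filter.mpr ⟨hwE, hne, h1⟩)
    · by_cases h2 : c u w = c x w
      · exact mem_union_right _ (mem_filter.mpr ⟨hwE, hne, h2⟩)
      · exact absurd ⟨hne', h1, h2⟩ hng
  -- G3 : row1 bound
  have G3 : ∀ x ∈ S.erase u,
      3 * ((S.erase u).filter (fun w => ¬(c u w = c u x) ∧ c u x = c x w)).card + 2 ≤
        (S.erase u).card := by
    intro x hx
    have hxu : x ≠ u := (mem_erase.mp hx).1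
    have hxS : x ∈ S := (mem_erase.mp hx).2
    have hsub : insert u ((S.erase u).filter (fun w => ¬(c u w = c u x) ∧ c u x = c x w)) ⊆
        (S.erase x).filter (fun w => c x w = c u x) := by
      refine insert_subset ?_ ?_
      · exact mem_filter.mpr ⟨mem_erase.mpr ⟨hxu.symm, hu⟩, hsymm x u ▸ rfl⟩
      · intro w hw
        obtain ⟨hwE, hne, heq⟩ := mem_filter.mp hw
        have hwS : w ∈ S := (mem_erase.mp hwE).2
        have hwx : w ≠ x := fun h => hne (by rw [h])
        exact mem_filter.mpr ⟨mem_erase.mpr ⟨hwx, hwS⟩, heq.symm⟩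
    have hnotmem : u ∉ (S.erase u).filter (fun w => ¬(c u w = c u x) ∧ c u x = c x w) :=
      fun h => (notMem_erase u S) (mem_of_mem_filter u h)
    have hcard := card_le_card hsub
    rw [card_insert_of_notMem hnotmem] at hcard
    have hb := hT x hxS (c u x)
    omega
  -- G4 : column bound for row2 (after swapping)
  have G4 : ∀ w ∈ S.erase u,
      3 * ((S.erase u).filter (fun x => ¬(c u w = c u x) ∧ c u w = c x w)).card + 2 ≤
        (S.erase u).card := by
    intro w hw
    have hwu : w ≠ u := (mem_erase.mp hw).1
    have hwS : w ∈ S := (mem_erase.mp hw).2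
    have hsub : insert u ((S.erase u).filter (fun x => ¬(c u w = c u x) ∧ c u w = c x w)) ⊆
        (S.erase w).filter (fun x => c w x = c u w) := by
      refine insert_subset ?_ ?_
      · exact mem_filter.mpr ⟨mem_erase.mpr ⟨hwu.symm, hu⟩, hsymm w u ▸ rfl⟩
      · intro x hx
        obtain ⟨hxE, hne, heq⟩ := mem_filter.mp hx
        have hxS : x ∈ S := (mem_erase.mp hxE).2
        have hxw : x ≠ w := fun h => hne (by rw [h])
        refine mem_filter.mpr ⟨mem_erase.mpr ⟨hxw, hxS⟩, ?_⟩
        rw [hsymm w x]; exact heq.symm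
    have hnotmem : u ∉ (S.erase u).filter (fun x => ¬(c u w = c u x) ∧ c u w = c x w) :=
      fun h => (notMem_erase u S) (mem_of_mem_filter u h)
    have hcard := card_le_card hsub
    rw [card_insert_of_notMem hnotmem] at hcard
    have hb := hT w hwS (c u w)
    omega
  -- swap sums
  have G5 : ∑ x ∈ S.erase u, ((S.erase u).filter (fun w => ¬(c u w = c u x) ∧ c u w = c x w)).card
      = ∑ w ∈ S.erase u, ((S.erase u).filter (fun x => ¬(c u w = c u x) ∧ c u w = c x w)).card := by
    calc ∑ x ∈ S.erase u, ((S.erase u).filter (fun w => ¬(c u w = c u x) ∧ c u w = c x w)).card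
        = ∑ x ∈ S.erase u, ∑ w ∈ S.erase u,
            (if ¬(c u w = c u x) ∧ c u w = c x w then 1 else 0) := by
          refine sum_congr rfl fun x _ => ?_
          rw [Finset.card_filter]
      _ = ∑ w ∈ S.erase u, ∑ x ∈ S.erase u,
            (if ¬(c u w = c u x) ∧ c u w = c x w then 1 else 0) := Finset.sum_comm
      _ = ∑ w ∈ S.erase u, ((S.erase u).filter (fun x => ¬(c u w = c u x) ∧ c u w = c x w)).card := by
          refine sum_congr rfl fun w _ => ?_
          rw [Finset.card_filter]
  -- Assemble
  set e := (S.erase u).card with hedef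
  have S1 : 3 * (e * e) ≤
      3 * (∑ x ∈ S.erase u, ((S.erase u).filter (fun w => ¬(c u w = c u x))).card) + (e * e + e) := by
    have h := Finset.sum_le_sum G1
    rw [sum_const, smul_eq_mul] at h
    rw [Finset.mul_sum]
    calc 3 * (e * e) = e * (3 * e) := by ring
      _ ≤ ∑ x ∈ S.erase u,
          (3 * ((S.erase u).filter (fun w => ¬(c u w = c u x))).card + (e + 1)) := h
      _ = (∑ x ∈ S.erase u, 3 * ((S.erase u).filter (fun w => ¬(c u w = c u x))).card) + e * (e + 1) := by
          rw [Finset.sum_add_distrib, sum_const, smul_eq_mul]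
      _ ≤ (∑ x ∈ S.erase u, 3 * ((S.erase u).filter (fun w => ¬(c u w = c u x))).card) + (e * e + e) := by
          have : e * (e + 1) = e * e + e := by ring
          omega
  have S2 : (∑ x ∈ S.erase u, ((S.erase u).filter (fun w => ¬(c u w = c u x))).card) ≤
      (∑ x ∈ S.erase u, ((S.erase u).filter (fun w => ¬(c u w = c u x) ∧ c u x = c x w)).card) +
      (∑ x ∈ S.erase u, ((S.erase u).filter (fun w => ¬(c u w = c u x) ∧ c u w = c x w)).card) := by
    rw [← Finset.sum_add_distrib]
    exact Finset.sum_le_sum G2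
  have S3 : 3 * (∑ x ∈ S.erase u, ((S.erase u).filter (fun w => ¬(c u w = c u x) ∧ c u x = c x w)).card)
      + 2 * e ≤ e * e := by
    have h := Finset.sum_le_sum G3
    rw [sum_const, smul_eq_mul] at h
    rw [Finset.mul_sum]
    calc (∑ x ∈ S.erase u, 3 * ((S.erase u).filter (fun w => ¬(c u w = c u x) ∧ c u x = c x w)).card)
          + 2 * e
        = ∑ x ∈ S.erase u,
            (3 * ((S.erase u).filter (fun w => ¬(c u w = c u x) ∧ c u x = c x w)).card + 2) := by
          rw [Finset.sum_add_distrib, sum_const, smul_eq_mul]; ring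
      _ ≤ e * e := h
  have S4 : 3 * (∑ w ∈ S.erase u, ((S.erase u).filter (fun x => ¬(c u w = c u x) ∧ c u w = c x w)).card)
      + 2 * e ≤ e * e := by
    have h := Finset.sum_le_sum G4
    rw [sum_const, smul_eq_mul] at h
    rw [Finset.mul_sum]
    calc (∑ w ∈ S.erase u, 3 * ((S.erase u).filter (fun x => ¬(c u w = c u x) ∧ c u w = c x w)).card)
          + 2 * e
        = ∑ w ∈ S.erase u,
            (3 * ((S.erase u).filter (fun x => ¬(c u w = c u x) ∧ c u w = c x w)).card + 2) := by
          rw [Finset.sum_add_distrib, sum_const, smul_eq_mul]; ring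
      _ ≤ e * e := h
  rw [G5] at S2
  -- linear arithmetic contradiction
  nlinarith [S1, S2, S3, S4, he1]

lemma build {n k : ℕ} (hk : 0 < k) (c : Fin n → Fin n → Fin k) (hc : IsGallai c) :
    ∀ r (q : Fin k → ℕ) (S : Finset (Fin n)), (∑ i, q i) = r →
      3 ^ ((∑ i, q i) + 1 - 2 * k) + 1 ≤ 2 * S.card →
      ∃ i, ∃ C ⊆ S, C.card = q i ∧ ∀ x ∈ C, ∀ y ∈ C, x ≠ y → c x y = i := by
  intro r
  induction r using Nat.strong_induction_on with
  | _ r ih =>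
    intro q S hr hcard
    by_cases h0 : ∃ i, q i = 0
    · obtain ⟨i, hi⟩ := h0
      exact ⟨i, ∅, empty_subset _, by simp [hi], by simp⟩
    push_neg at h0
    by_cases h1 : ∃ i, q i = 1
    · obtain ⟨i, hi⟩ := h1
      have hpos : 0 < S.card := by
        have : 1 ≤ 3 ^ ((∑ i, q i) + 1 - 2 * k) := Nat.one_le_pow _ _ (by norm_num)
        omega
      obtain ⟨v, hv⟩ := card_pos.mp hpos
      refine ⟨i, {v}, singleton_subset_iff.mpr hv, by simp [hi], ?_⟩
      intro x hx y hy hxy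
      simp only [mem_singleton] at hx hy
      exact absurd (hx.trans hy.symm) hxy
    push_neg at h1
    have h2 : ∀ i, 2 ≤ q i := by
      intro i
      have := h0 i
      have := h1 i
      omega
    have hsum2k : 2 * k ≤ ∑ i, q i := by
      calc 2 * k = ∑ _i : Fin k, 2 := by simp [mul_comm]
        _ ≤ ∑ i, q i := Finset.sum_le_sum (fun i _ => h2 i)
    have hex1 : 1 ≤ (∑ i, q i) + 1 - 2 * k := by omega
    have hS2 : 2 ≤ S.card := by
      have h3 : 3 ^ 1 ≤ 3 ^ ((∑ i, q i) + 1 - 2 * k) :=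
        Nat.pow_le_pow_right (by norm_num) hex1
      simp at h3
      omega
    obtain ⟨v, hv, i, T, hTsub, hTmono, hTcard⟩ := star_lemma c hc S hS2
    set q' : Fin k → ℕ := Function.update q i (q i - 1) with hq'
    have hsumq' : (∑ j, q' j) = (∑ j, q j) - 1 := by
      rw [hq', Finset.sum_update_of_mem (mem_univ i)]
      have h := Finset.add_sum_erase Finset.univ q (mem_univ i)
      rw [← Finset.erase_eq]
      have := h2 i
      omega
    have hrpos : 1 ≤ r := by
      have := h2 ⟨0, hk⟩
      omega
    have hTcard' : 3 ^ ((∑ j, q' j) + 1 - 2 * k) + 1 ≤ 2 * T.card := by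
      have hpow : 3 ^ ((∑ j, q j) + 1 - 2 * k) =
          3 * 3 ^ ((∑ j, q' j) + 1 - 2 * k) := by
        rw [hsumq']
        have h3 : (∑ j, q j) + 1 - 2 * k = ((∑ j, q j) - 1 + 1 - 2 * k) + 1 := by omega
        rw [h3, pow_succ]
        ring
      omega
    obtain ⟨j, C, hCsub, hCcard, hCmono⟩ := ih (r - 1) (by omega) q' T (by omega) hTcard'
    by_cases hji : j = i
    · subst hji
      have hvC : v ∉ C := fun h => (notMem_erase v S) (hTsub (hCsub h))
      refine ⟨j, insert v C, ?_, ?_, ?_⟩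
      · exact insert_subset hv (hCsub.trans (hTsub.trans (erase_subset _ _)))
      · rw [card_insert_of_notMem hvC, hCcard, hq', Function.update_self]
        have := h2 j
        omega
      · intro x hx y hy hxy
        rcases mem_insert.mp hx with rfl | hxC
        · rcases mem_insert.mp hy with rfl | hyC
          · exact absurd rfl hxy
          · exact hTmono y (hCsub hyC)
        · rcases mem_insert.mp hy with rfl | hyC
          · rw [hc.1 x y]; exact hTmono x (hCsub hxC)
          · exact hCmono x hxC y hyC hxy
    · refine ⟨j, C, hCsub.trans (hTsub.trans (erase_subset _ _)), ?_, hCmono⟩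
      rw [hCcard, hq', Function.update_of_ne hji]

lemma numeric : ∀ j : ℕ, 3 ^ (j + 10) + 3 ≤ 2 ^ (2 * j + 16) := by
  intro j
  induction j with
  | zero => norm_num
  | succ j ih =>
    have h1 : 3 ^ (j + 1 + 10) + 3 ≤ 3 * (3 ^ (j + 10) + 3) := by
      rw [show j + 1 + 10 = (j + 10) + 1 by ring, pow_succ]
      ring_nf
      omega
    have h2 : 3 * (3 ^ (j + 10) + 3) ≤ 3 * 2 ^ (2 * j + 16) :=
      Nat.mul_le_mul_left 3 ih
    have h3 : (3:ℕ) * 2 ^ (2 * j + 16) ≤ 4 * 2 ^ (2 * j + 16) := by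
      have : 0 < 2 ^ (2 * j + 16) := Nat.pow_pos (show 0 < 2 from by norm_num)
      nlinarith
    have h4 : (4:ℕ) * 2 ^ (2 * j + 16) = 2 ^ (2 * (j + 1) + 16) := by
      rw [show 2 * (j + 1) + 16 = (2 * j + 16) + 2 by ring, pow_add]
      ring
    omega

lemma key {k p : ℕ} (hk : 3 ≤ k) (hp : 5 ≤ p) (N : ℕ)
    (hN : 3 ^ (k * (p - 2) + 1) + 1 ≤ 2 * N) :
    ∀ c : Fin N → Fin N → Fin k, IsGallai c →
      ∃ S : Finset (Fin N), S.card = p ∧ (colorsOn c S).card ≤ 1 := by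
  intro c hc
  have hexp : (∑ _i : Fin k, p) + 1 - 2 * k = k * (p - 2) + 1 := by
    rw [Finset.sum_const, card_univ, Fintype.card_fin, smul_eq_mul]
    have h : k * p = k * (p - 2) + k * 2 := by
      rw [← Nat.mul_add]
      congr 1
      omega
    omega
  have hcard : 3 ^ ((∑ _i : Fin k, p) + 1 - 2 * k) + 1 ≤ 2 * (univ : Finset (Fin N)).card := by
    rw [hexp, card_univ, Fintype.card_fin]
    exact hN
  obtain ⟨i, C, _, hCcard, hCmono⟩ :=
    build (by omega) c hc (∑ _i : Fin k, p) (fun _ => p) univ rfl hcard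
  refine ⟨C, hCcard, ?_⟩
  have hsub : colorsOn c C ⊆ {i} := by
    intro b hb
    simp only [colorsOn, mem_image, mem_filter, mem_product] at hb
    obtain ⟨⟨x, y⟩, ⟨⟨hx, hy⟩, hxy⟩, rfl⟩ := hb
    simp [hCmono x hx y hy hxy]
  exact le_trans (card_le_card hsub) (by simp)

theorem gallaiNum_one_lt (k p : ℕ) (hk : 3 ≤ k) (hp : 5 ≤ p) :
    gallaiNum k 1 p < 2 ^ (2 * k * (p - 2) - 3) ∧
    ∀ c : Fin (2 ^ (2 * k * (p - 2) - 3)) → Fin (2 ^ (2 * k * (p - 2) - 3)) → Fin k,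
      IsGallai c →
        ∃ S : Finset (Fin (2 ^ (2 * k * (p - 2) - 3))),
          S.card = p ∧ (colorsOn c S).card ≤ 1 := by
  have hm : 9 ≤ k * (p - 2) := by
    calc 9 = 3 * 3 := by norm_num
      _ ≤ k * (p - 2) := Nat.mul_le_mul hk (by omega)
  have hnum : 3 ^ (k * (p - 2) + 1) + 3 ≤ 2 ^ (2 * (k * (p - 2)) - 2) := by
    have e1 : k * (p - 2) + 1 = (k * (p - 2) - 9) + 10 := by omega
    have e2 : 2 * (k * (p - 2)) - 2 = 2 * (k * (p - 2) - 9) + 16 := by omega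
    rw [e1, e2]
    exact numeric _
  have hpowrel : 2 * 2 ^ (2 * k * (p - 2) - 3) = 2 ^ (2 * (k * (p - 2)) - 2) := by
    have e3 : 2 * (k * (p - 2)) - 2 = (2 * k * (p - 2) - 3) + 1 := by
      have : 2 * k * (p - 2) = 2 * (k * (p - 2)) := by ring
      omega
    rw [e3, pow_succ]
    ring
  have hnpos : 2 ≤ 2 ^ (2 * k * (p - 2) - 3) := by
    calc 2 = 2 ^ 1 := by norm_num
      _ ≤ 2 ^ (2 * k * (p - 2) - 3) := by
        apply Nat.pow_le_pow_right (by norm_num)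
        have : 2 * k * (p - 2) = 2 * (k * (p - 2)) := by ring
        omega
  constructor
  · have hmem : (2 ^ (2 * k * (p - 2) - 3) - 1) ∈
        {n : ℕ | 0 < n ∧ ∀ c : Fin n → Fin n → Fin k, IsGallai c →
          ∃ S : Finset (Fin n), S.card = p ∧ (colorsOn c S).card ≤ 1} := by
      constructor
      · omega
      · apply key hk hp
        omega
    have := Nat.sInf_le hmem
    calc gallaiNum k 1 p ≤ 2 ^ (2 * k * (p - 2) - 3) - 1 := this
      _ < 2 ^ (2 * k * (p - 2) - 3) := by omega
  · apply key hk hp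
    omega
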